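/- Let T be a spanning tree of graph G rooted at r with every edge directed toward the root (each non-root vertex has a directed path to r). Let u be a non-root vertex with parent u', and let e = {v,w} be an edge of G not in T such that v is a descendant of u in T and w is not. Let T' be obtained from T by removing edge (u,u'), adding edge (v,w) directed from v to w, and reversing the orientation of every edge on the directed path from v to u in T. Then T' is a spanning tree in which every vertex has a directed path to r. -/

import Mathlib

open SimpleGraph

lemma iter_per {V : Type*} {r : V} {q : V → V} (hq0 : q r = r)
    (hreach : ∀ x, ∃ m, q^[m] x = r) :
    ∀ x k, 0 < k → q^[k] x = x → x = r := by
  intro x k hk hx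
  obtain ⟨m, hm⟩ := hreach x
  have hmul : ∀ j, q^[k * j] x = x := by
    intro j
    induction j with
    | zero => simp
    | succ j ih => rw [Nat.mul_succ, Function.iterate_add_apply, hx, ih]
  have h1 : m ≤ k * m := Nat.le_mul_of_pos_left m hk
  calc x = q^[k * m] x := (hmul m).symm
    _ = q^[(k * m - m) + m] x := by rw [Nat.sub_add_cancel h1]
    _ = q^[k * m - m] (q^[m] x) := Function.iterate_add_apply q _ _ x
    _ = r := by rw [hm]; exact Function.iterate_fixed hq0 _

lemma aux_tree {V : Type*} (r : V) (q : V → V) (hq0 : q r = r)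
    (hne : ∀ x, x ≠ r → x ≠ q x)
    (hreach : ∀ x, ∃ m, q^[m] x = r) :
    (SimpleGraph.fromEdgeSet {e | ∃ x, x ≠ r ∧ e = s(x, q x)}).Connected ∧
    (SimpleGraph.fromEdgeSet {e | ∃ x, x ≠ r ∧ e = s(x, q x)}).IsAcyclic := by
  haveI := Classical.decEq V
  set T := SimpleGraph.fromEdgeSet {e : Sym2 V | ∃ x, x ≠ r ∧ e = s(x, q x)} with hT
  have adj_of : ∀ {a : V}, a ≠ r → T.Adj a (q a) := by
    intro a ha
    rw [hT, SimpleGraph.fromEdgeSet_adj]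
    exact ⟨⟨a, ha, rfl⟩, hne a ha⟩
  have adj_cases : ∀ {a b : V}, T.Adj a b → (a ≠ r ∧ b = q a) ∨ (b ≠ r ∧ a = q b) := by
    intro a b hab
    rw [hT, SimpleGraph.fromEdgeSet_adj] at hab
    obtain ⟨⟨x, hx, hs⟩, _⟩ := hab
    rw [Sym2.eq_iff] at hs
    rcases hs with ⟨rfl, rfl⟩ | ⟨rfl, rfl⟩
    · exact Or.inl ⟨hx, rfl⟩
    · exact Or.inr ⟨hx, rfl⟩
  have walkTo : ∀ m x, q^[m] x = r →
      ∃ W : T.Walk x r, ∀ e ∈ W.edges, ∃ i, q^[i] x ≠ r ∧ e = s(q^[i] x, q^[i+1] x) := by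
    intro m
    induction m with
    | zero =>
      intro x hx
      simp only [Function.iterate_zero_apply] at hx
      subst hx
      exact ⟨Walk.nil, by simp⟩
    | succ m ih =>
      intro x hx
      by_cases hxr : x = r
      · subst hxr; exact ⟨Walk.nil, by simp⟩
      · have hq : q^[m] (q x) = r := by rw [← Function.iterate_succ_apply]; exact hx
        obtain ⟨W, hW⟩ := ih (q x) hq
        refine ⟨Walk.cons (adj_of hxr) W, ?_⟩
        intro e he
        rw [Walk.edges_cons, List.mem_cons] at he
        rcases he with rfl | he
        · exact ⟨0, by simpa using hxr, by simp⟩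
        · obtain ⟨i, h1, h2⟩ := hW e he
          refine ⟨i + 1, by rwa [Function.iterate_succ_apply], ?_⟩
          rw [h2, ← Function.iterate_succ_apply, ← Function.iterate_succ_apply]
  have key : ∀ (L : ℕ) (x : V) (W : T.Walk x r), W.length ≤ L → x ≠ r →
      s(x, q x) ∈ W.edges := by
    intro L
    induction L with
    | zero =>
      intro x W hW hx
      cases W with
      | nil => exact absurd rfl hx
      | cons h rest => simp [Walk.length_cons] at hW
    | succ L ih =>
      intro x W hW hx
      cases W with
      | nil => exact absurd rfl hx
      | cons h rest =>
        rename_i y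
        rcases adj_cases h with ⟨hxr, hy⟩ | ⟨hyr, hx'⟩
        · subst hy
          rw [Walk.edges_cons]
          exact List.mem_cons_self
        · have hrest : rest.length ≤ L := by
            rw [Walk.length_cons] at hW; omega
          have h1 := ih y rest hrest hyr
          rw [← hx'] at h1
          have hsup : x ∈ rest.support := Walk.snd_mem_support_of_mem_edges rest h1
          have h2 := ih x (rest.dropUntil x hsup)
            (le_trans (Walk.length_dropUntil_le rest hsup) hrest) hx
          rw [Walk.edges_cons]
          exact List.mem_cons_of_mem _ (Walk.edges_dropUntil_subset rest hsup h2)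
  constructor
  · rw [SimpleGraph.connected_iff]
    have hr : ∀ x, T.Reachable x r := by
      intro x
      obtain ⟨m, hm⟩ := hreach x
      obtain ⟨W, _⟩ := walkTo m x hm
      exact ⟨W⟩
    exact ⟨fun a b => (hr a).trans (hr b).symm, ⟨r⟩⟩
  · rw [SimpleGraph.isAcyclic_iff_forall_adj_isBridge]
    have bridge : ∀ c, c ≠ r → T.IsBridge s(c, q c) := by
      intro c hc
      rw [SimpleGraph.isBridge_iff_adj_and_forall_walk_mem_edges]
      intro W
      obtain ⟨m, hm⟩ := hreach (q c)
      obtain ⟨C, hC⟩ := walkTo m (q c) hm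
      have hk := key (W.append C).length c (W.append C) le_rfl hc
      rw [Walk.edges_append, List.mem_append] at hk
      rcases hk with h | h
      · exact h
      · exfalso
        obtain ⟨i, h1, h2⟩ := hC _ h
        rw [Sym2.eq_iff] at h2
        rcases h2 with ⟨e1, e2⟩ | ⟨e1, e2⟩
        · exact hc (iter_per hq0 hreach c (i+1) (Nat.succ_pos i)
            (by rw [Function.iterate_succ_apply]; exact e1.symm))
        · exact hc (iter_per hq0 hreach c (i+2) (by omega)
            (by rw [show i+2 = (i+1)+1 from rfl, Function.iterate_succ_apply,
              Function.iterate_succ_apply]; exact e1.symm))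
    intro a b hab
    rcases adj_cases hab with ⟨h1, rfl⟩ | ⟨h1, rfl⟩
    · exact bridge a h1
    · rw [Sym2.eq_swap]
      exact bridge b h1

/-- A spanning tree oriented towards the root `r` is encoded by a parent map
`p : V → V` (with `p r = r`); its edges are `{x, p x}` for `x ≠ r`.
If `{v, w}` is a non-tree edge of `G` with `v` a descendant of `u ≠ r` and `w`
not a descendant of `u`, and `p'` is the parent map obtained by removing the
edge `(u, p u)`, adding the edge `(v, w)` directed from `v` to `w`, and
reversing the orientation of the directed path from `v` to `u`, then the new
graph is again a spanning tree in which every vertex has a directed path to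
the root `r`. -/
theorem stmt_11 {V : Type*} [Fintype V] (G : SimpleGraph V) (r : V)
    (p : V → V) (hpr : p r = r)
    (hadj : ∀ x, x ≠ r → G.Adj x (p x))
    (hreach : ∀ x, ∃ m, p^[m] x = r)
    (htree : (SimpleGraph.fromEdgeSet {e | ∃ x, x ≠ r ∧ e = s(x, p x)}).Connected ∧
      (SimpleGraph.fromEdgeSet {e | ∃ x, x ≠ r ∧ e = s(x, p x)}).IsAcyclic)
    (u v w : V) (hur : u ≠ r)
    (hvw : G.Adj v w)
    (hnotT : s(v, w) ∉ {e : Sym2 V | ∃ x, x ≠ r ∧ e = s(x, p x)})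
    (n : ℕ) (hdesc : p^[n] v = u)
    (hnotdesc : ¬ ∃ m, p^[m] w = u)
    (p' : V → V)
    (h'v : p' v = w)
    (h'rev : ∀ j, j < n → p' (p^[j + 1] v) = p^[j] v)
    (h'off : ∀ x, (¬ ∃ j ≤ n, p^[j] v = x) → p' x = p x) :
    (∀ x, ∃ m, p'^[m] x = r) ∧
      (SimpleGraph.fromEdgeSet {e | ∃ x, x ≠ r ∧ e = s(x, p' x)}).Connected ∧
      (SimpleGraph.fromEdgeSet {e | ∃ x, x ≠ r ∧ e = s(x, p' x)}).IsAcyclic ∧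
      {e : Sym2 V | ∃ x, x ≠ r ∧ e = s(x, p' x)} =
        ({e : Sym2 V | ∃ x, x ≠ r ∧ e = s(x, p x)} \ {s(u, p u)}) ∪ {s(v, w)} := by
  -- basic facts about the path from v to u
  have F1 : ∀ j, j ≤ n → p^[j] v ≠ r := by
    intro j hj hjr
    apply hur
    have h2 : u = p^[n - j] (p^[j] v) := by
      rw [← Function.iterate_add_apply, Nat.sub_add_cancel hj, hdesc]
    rw [hjr, Function.iterate_fixed hpr] at h2
    exact h2
  have inj : ∀ i j, i ≤ n → j ≤ n → p^[i] v = p^[j] v → i = j := by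
    have base : ∀ i j, i ≤ j → j ≤ n → p^[i] v = p^[j] v → i = j := by
      intro i j hij hjn heq
      by_contra hne2
      have hlt : i < j := lt_of_le_of_ne hij hne2
      have hper : p^[j - i] (p^[i] v) = p^[i] v := by
        rw [← Function.iterate_add_apply, Nat.sub_add_cancel hij, ← heq]
      exact F1 i (le_trans hij hjn) (iter_per hpr hreach _ (j - i) (by omega) hper)
    intro i j hi hj heq
    rcases le_total i j with h | h
    · exact base i j h hj heq
    · exact (base j i h hi heq.symm).symm
  have F3 : ∀ m j, j ≤ n → p^[j] v ≠ p^[m] w := by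
    intro m j hj heq
    apply hnotdesc
    refine ⟨(n - j) + m, ?_⟩
    rw [Function.iterate_add_apply, ← heq, ← Function.iterate_add_apply,
      Nat.sub_add_cancel hj, hdesc]
  have hvr : v ≠ r := by simpa using F1 0 (Nat.zero_le n)
  have h'r : p' r = r := by
    rw [h'off r (by rintro ⟨j, hj, h⟩; exact F1 j hj h), hpr]
  have per2 : ∀ a, p (p a) = a → a = r := by
    intro a ha
    refine iter_per hpr hreach a 2 (by omega) ?_
    simp only [Function.iterate_succ_apply', Function.iterate_zero_apply]
    exact ha
  -- reachability under p'
  have Rw : ∀ m, p'^[m] w = p^[m] w := by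
    intro m
    induction m with
    | zero => simp
    | succ m ih =>
      rw [Function.iterate_succ_apply', Function.iterate_succ_apply', ih,
        h'off _ (by rintro ⟨j, hj, h⟩; exact F3 m j hj h)]
  have RD : ∀ j, j ≤ n → p'^[j] (p^[j] v) = v := by
    intro j
    induction j with
    | zero => intro _; simp
    | succ j ih =>
      intro h
      rw [Function.iterate_succ_apply, h'rev j (by omega), ih (by omega)]
  have Rv : ∃ M, p'^[M] v = r := by
    obtain ⟨M, hM⟩ := hreach w
    exact ⟨M + 1, by rw [Function.iterate_succ_apply, h'v, Rw, hM]⟩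
  have reach' : ∀ x, ∃ k, p'^[k] x = r := by
    have main : ∀ m x, p^[m] x = r → ∃ k, p'^[k] x = r := by
      intro m
      induction m with
      | zero => intro x hx; exact ⟨0, by simpa using hx⟩
      | succ m ih =>
        intro x hx
        by_cases hp : ∃ j, j ≤ n ∧ p^[j] v = x
        · obtain ⟨j, hj, rfl⟩ := hp
          obtain ⟨M, hM⟩ := Rv
          exact ⟨M + j, by rw [Function.iterate_add_apply, RD j hj, hM]⟩
        · by_cases hxr : x = r
          · exact ⟨0, by simp [hxr]⟩
          · obtain ⟨k, hk⟩ := ih (p x) (by rw [← Function.iterate_succ_apply]; exact hx)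
            exact ⟨k + 1, by rw [Function.iterate_succ_apply, h'off x hp, hk]⟩
    intro x
    obtain ⟨m, hm⟩ := hreach x
    exact main m x hm
  have ne' : ∀ x, x ≠ r → x ≠ p' x := by
    intro x hx
    by_cases hp : ∃ j, j ≤ n ∧ p^[j] v = x
    · obtain ⟨j, hj, rfl⟩ := hp
      cases j with
      | zero => simpa [h'v] using hvw.ne
      | succ k =>
        rw [h'rev k (by omega)]
        intro heq
        exact absurd (inj (k+1) k hj (by omega) heq) (by omega)
    · rw [h'off x hp]
      exact (hadj x hx).ne
  -- edge set equality
  have hsets : {e : Sym2 V | ∃ x, x ≠ r ∧ e = s(x, p' x)} =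
      ({e : Sym2 V | ∃ x, x ≠ r ∧ e = s(x, p x)} \ {s(u, p u)}) ∪ {s(v, w)} := by
    ext e
    simp only [Set.mem_union, Set.mem_diff, Set.mem_setOf_eq, Set.mem_singleton_iff]
    constructor
    · rintro ⟨x, hx, rfl⟩
      by_cases hp : ∃ j, j ≤ n ∧ p^[j] v = x
      · obtain ⟨j, hj, rfl⟩ := hp
        cases j with
        | zero => right; simp [h'v]
        | succ k =>
          left
          rw [h'rev k (by omega)]
          refine ⟨⟨p^[k] v, F1 k (by omega), ?_⟩, ?_⟩
          · rw [← Function.iterate_succ_apply' p k v]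
            exact Sym2.eq_swap
          · intro heq
            rw [Sym2.eq_iff] at heq
            rcases heq with ⟨e1, e2⟩ | ⟨e1, e2⟩
            · -- p^[k+1] v = u and p^[k] v = p u
              apply hur
              apply per2
              rw [← e2, ← Function.iterate_succ_apply' p k v, e1]
            · -- p^[k+1] v = p u and p^[k] v = u
              have := inj k n (by omega) le_rfl (e2.trans hdesc.symm)
              omega
      · left
        rw [h'off x hp]
        refine ⟨⟨x, hx, rfl⟩, ?_⟩
        intro heq
        rw [Sym2.eq_iff] at heq
        rcases heq with ⟨e1, e2⟩ | ⟨e1, e2⟩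
        · exact hp ⟨n, le_rfl, hdesc.trans e1.symm⟩
        · subst e1
          exact hur (per2 u e2)
    · rintro (⟨⟨x, hx, rfl⟩, hne2⟩ | rfl)
      · by_cases hp : ∃ j, j ≤ n ∧ p^[j] v = x
        · obtain ⟨j, hj, rfl⟩ := hp
          have hjn : j < n := by
            rcases eq_or_lt_of_le hj with h | h
            · exfalso; apply hne2; subst h; rw [hdesc]
            · exact h
          refine ⟨p^[j+1] v, F1 (j+1) (by omega), ?_⟩
          rw [h'rev j hjn, ← Function.iterate_succ_apply' p j v]
          exact Sym2.eq_swap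
        · exact ⟨x, hx, by rw [h'off x hp]⟩
      · exact ⟨v, hvr, by rw [h'v]⟩
  obtain ⟨hconn', hacyc'⟩ := aux_tree r p' h'r ne' reach'
  exact ⟨reach', hconn', hacyc', hsets⟩
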